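/- Let S = ℕ with the semigroup operation m·n = max{m,n}. Then the semigroup algebra ℓ¹(S) is strong pseudo-amenable but not amenable. -/

import Mathlib

noncomputable section

open ContinuousLinearMap NormedSpace

/-- A directed index system for nets. -/
structure DirSys : Type 1 where
  ι : Type
  le : ι → ι → Prop
  refl : ∀ i, le i i
  trans : ∀ {i j k}, le i j → le j k → le i k
  nonempty : Nonempty ι
  directed : ∀ i j, ∃ k, le i k ∧ le j k

/-- Convergence of a net indexed by a directed system, in a (pseudo)metric space. -/
def DirSys.Tendsto (D : DirSys) {X : Type*} [PseudoMetricSpace X] (m : D.ι → X) (x : X) : Prop :=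
  ∀ ε : ℝ, 0 < ε → ∃ i, ∀ j, D.le i j → dist (m j) x < ε

variable (A : Type*) [NonUnitalNormedRing A] [NormedSpace ℂ A]
  [IsScalarTower ℂ A A] [SMulCommClass ℂ A A]

/-- The continuous bilinear forms on `A`, i.e. the dual space of the projective tensor
product `A ⊗̂ A`. -/
abbrev BilForms := A →L[ℂ] StrongDual ℂ A

/-- The bidual `(A ⊗̂ A)**` of the projective tensor product, realized concretely as the
dual space of the space of continuous bilinear forms on `A` (the latter being canonically,
isometrically, the dual of `A ⊗̂ A`). -/
abbrev TensorBidual := StrongDual ℂ (BilForms A)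

instance : NormedAddCommGroup (TensorBidual A) :=
  @ContinuousLinearMap.toNormedAddCommGroup ℂ ℂ (BilForms A) ℂ _ _ _ _ _ _ (RingHom.id ℂ) _

instance : NormedSpace ℂ (TensorBidual A) :=
  @ContinuousLinearMap.toNormedSpace ℂ ℂ (BilForms A) ℂ _ _ _ _ _ _ (RingHom.id ℂ) _ ℂ _ _ _

/-- The bidual `A**` of `A`. -/
abbrev Bidual := StrongDual ℂ (StrongDual ℂ A)

variable {A}

/-- The elementary tensor `x ⊗ y`, viewed inside `(A ⊗̂ A)**` via the canonical isometric
embedding of `A ⊗̂ A` into its bidual. -/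
def elemT (x y : A) : TensorBidual A :=
  (ContinuousLinearMap.apply ℂ ℂ y).comp (ContinuousLinearMap.apply ℂ (StrongDual ℂ A) x)

variable (A)

/-- The canonical isometric copy of `A ⊗̂ A` inside its bidual: the closure of the linear
span of the elementary tensors. -/
def ptp : Submodule ℂ (TensorBidual A) :=
  (Submodule.span ℂ {m : TensorBidual A | ∃ x y : A, m = elemT x y}).topologicalClosure

/-- The map `f ↦ f·a` on bilinear forms, `(f·a)(x,y) = f(ax, y)`; predual of the left
module action of `A` on `(A ⊗̂ A)**`. -/
def leftBil (a : A) : BilForms A →L[ℂ] BilForms A :=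
  (compL ℂ A A (StrongDual ℂ A)).flip (ContinuousLinearMap.mul ℂ A a)

/-- The map `f ↦ a·f` on bilinear forms, `(a·f)(x,y) = f(x, ya)`; predual of the right
module action of `A` on `(A ⊗̂ A)**`. -/
def rightBil (a : A) : BilForms A →L[ℂ] BilForms A :=
  compL ℂ A (StrongDual ℂ A) (StrongDual ℂ A)
    ((compL ℂ A A ℂ).flip ((ContinuousLinearMap.mul ℂ A).flip a))

variable {A}

/-- The left module action `a · m` of `A` on `(A ⊗̂ A)**`, extending
`a · (x ⊗ y) = (a x) ⊗ y`. -/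
def tsmulL (a : A) (m : TensorBidual A) : TensorBidual A := m.comp (leftBil A a)

/-- The right module action `m · a` of `A` on `(A ⊗̂ A)**`, extending
`(x ⊗ y) · a = x ⊗ (y a)`. -/
def tsmulR (a : A) (m : TensorBidual A) : TensorBidual A := m.comp (rightBil A a)

variable (A)

/-- The adjoint `π_A* : A* → (A ⊗̂ A)*` of the product morphism `π_A`, namely
`(π_A* f)(x, y) = f (x y)`. -/
def piStar : StrongDual ℂ A →L[ℂ] BilForms A :=
  ((compL ℂ A (A →L[ℂ] A) (StrongDual ℂ A)).flip (ContinuousLinearMap.mul ℂ A)).comp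
    (compL ℂ A A ℂ)

variable {A}

/-- The second adjoint `π_A** : (A ⊗̂ A)** → A**` of the product morphism. -/
def piSS (m : TensorBidual A) : Bidual A := m.comp (piStar A)

variable (A)

/-- The map `f ↦ f·a` on `A*`, `(f·a)(x) = f(ax)`. -/
def dualROp (a : A) : StrongDual ℂ A →L[ℂ] StrongDual ℂ A :=
  (compL ℂ A A ℂ).flip (ContinuousLinearMap.mul ℂ A a)

/-- The map `f ↦ a·f` on `A*`, `(a·f)(x) = f(xa)`. -/
def dualLOp (a : A) : StrongDual ℂ A →L[ℂ] StrongDual ℂ A :=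
  (compL ℂ A A ℂ).flip ((ContinuousLinearMap.mul ℂ A).flip a)

variable {A}

/-- The product `a · Φ` of `a ∈ A` and `Φ ∈ A**`: `(a·Φ)(f) = Φ(f·a)`. -/
def bsmulL (a : A) (Φ : Bidual A) : Bidual A := Φ.comp (dualROp A a)

/-- The product `Φ · a` of `Φ ∈ A**` and `a ∈ A`: `(Φ·a)(f) = Φ(a·f)`. -/
def bsmulR (a : A) (Φ : Bidual A) : Bidual A := Φ.comp (dualLOp A a)

/-- The canonical isometric embedding of `A` into its bidual. -/
def inclB (a : A) : Bidual A := NormedSpace.inclusionInDoubleDual ℂ A a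

variable (A)

/-- A Banach algebra `A` is *strong pseudo-amenable* if there is a (not necessarily bounded)
net `(m_α)` in `(A ⊗̂ A)**` such that `a·m_α − m_α·a → 0` and
`a·π_A**(m_α) = π_A**(m_α)·a → a` for every `a ∈ A`. -/
def StrongPseudoAmenable : Prop :=
  ∃ (D : DirSys) (m : D.ι → TensorBidual A),
    (∀ a : A, D.Tendsto (fun α => tsmulL a (m α) - tsmulR a (m α)) 0) ∧
    (∀ (a : A) (α : D.ι), bsmulL a (piSS (m α)) = bsmulR a (piSS (m α))) ∧
    (∀ a : A, D.Tendsto (fun α => bsmulR a (piSS (m α))) (inclB a))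

/-- A Banach algebra `A` is *pseudo-amenable* if there is a (not necessarily bounded)
net `(m_α)` in `A ⊗̂ A` such that `a·m_α − m_α·a → 0` and `π_A(m_α)a → a` for every `a ∈ A`. -/
def PseudoAmenable : Prop :=
  ∃ (D : DirSys) (m : D.ι → TensorBidual A),
    (∀ α, m α ∈ ptp A) ∧
    (∀ a : A, D.Tendsto (fun α => tsmulL a (m α) - tsmulR a (m α)) 0) ∧
    (∀ a : A, D.Tendsto (fun α => bsmulR a (piSS (m α))) (inclB a))

/-- A Banach algebra `A` is *pseudo-contractible* if there is a net `(m_α)` in `A ⊗̂ A`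
such that `a·m_α = m_α·a` and `π_A(m_α)a → a` for every `a ∈ A`. -/
def PseudoContractible : Prop :=
  ∃ (D : DirSys) (m : D.ι → TensorBidual A),
    (∀ α, m α ∈ ptp A) ∧
    (∀ (a : A) (α : D.ι), tsmulL a (m α) = tsmulR a (m α)) ∧
    (∀ a : A, D.Tendsto (fun α => bsmulR a (piSS (m α))) (inclB a))

/-- A Banach algebra `A` is *amenable* if it has a bounded approximate diagonal: a bounded
net `(m_α)` in `A ⊗̂ A` such that `a·m_α − m_α·a → 0` and `π_A(m_α)a → a` for every `a ∈ A`. -/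
def AmenableBanachAlgebra : Prop :=
  ∃ (D : DirSys) (m : D.ι → TensorBidual A) (C : ℝ),
    (∀ α, m α ∈ ptp A) ∧
    (∀ α, ‖m α‖ ≤ C) ∧
    (∀ a : A, D.Tendsto (fun α => tsmulL a (m α) - tsmulR a (m α)) 0) ∧
    (∀ a : A, D.Tendsto (fun α => bsmulR a (piSS (m α))) (inclB a))

end

/-- `(L, δ)` is a realization of the semigroup algebra `ℓ¹(S)` for the semigroup
multiplication `mulS` on `S`: the `δ s` are the point masses, multiplication is
convolution (determined by `δ s * δ t = δ (s t)`), finite linear combinations of point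
masses carry the `ℓ¹`-norm, and they have dense linear span. -/
def IsL1SemigroupAlgebra (S : Type) (mulS : S → S → S) (L : Type)
    [NonUnitalNormedRing L] [NormedSpace ℂ L] (δ : S → L) : Prop :=
  (∀ s t : S, δ s * δ t = δ (mulS s t)) ∧
  (∀ (F : Finset S) (c : S → ℂ), ‖∑ s ∈ F, c s • δ s‖ = ∑ s ∈ F, ‖c s‖) ∧
  ((Submodule.span ℂ (Set.range δ)).topologicalClosure = ⊤)



set_option linter.unusedSectionVars false
set_option linter.unusedVariables false
noncomputable section Aux
open ContinuousLinearMap NormedSpace Finset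

variable {L : Type} [NonUnitalNormedRing L] [NormedSpace ℂ L] [IsScalarTower ℂ L L]
  [SMulCommClass ℂ L L] [CompleteSpace L] {δ : ℕ → L}

/-! Basic computation lemmas about the abstract tensor machinery. -/

lemma elemT_apply (x y : L) (f : BilForms L) : elemT x y f = f x y := rfl

lemma tsmulL_elemT (a x y : L) : tsmulL a (elemT x y) = elemT (a * x) y := rfl

lemma tsmulR_elemT (a x y : L) : tsmulR a (elemT x y) = elemT x (y * a) := rfl

lemma piSS_elemT (x y : L) : piSS (elemT x y) = inclB (x * y) := rfl

lemma bsmulR_inclB (a b : L) : bsmulR a (inclB b) = inclB (b * a) := rfl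

lemma bsmulL_inclB (a b : L) : bsmulL a (inclB b) = inclB (a * b) := rfl

lemma elemT_add_left (x x' y : L) : elemT (x + x') y = elemT x y + elemT x' y := by
  ext f; simp [elemT]

lemma elemT_sub_left (x x' y : L) : elemT (x - x') y = elemT x y - elemT x' y := by
  ext f; simp [elemT]; rfl

lemma elemT_smul_left (c : ℂ) (x y : L) : elemT (c • x) y = c • elemT x y := by
  ext f; simp [elemT]

lemma elemT_sub_right (x y y' : L) : elemT x (y - y') = elemT x y - elemT x y' := by
  ext f; simp [elemT]; rfl

lemma elemT_smul_right (c : ℂ) (x y : L) : elemT x (c • y) = c • elemT x y := by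
  ext f; simp [elemT]

lemma norm_elemT_le (x y : L) : ‖elemT x y‖ ≤ ‖x‖ * ‖y‖ := by
  refine opNorm_le_bound _ (by positivity) fun f => ?_
  calc ‖f x y‖ ≤ ‖f x‖ * ‖y‖ := (f x).le_opNorm y
    _ ≤ (‖f‖ * ‖x‖) * ‖y‖ := by gcongr; exact f.le_opNorm x
    _ = ‖x‖ * ‖y‖ * ‖f‖ := by ring

lemma tsmulL_sum {β : Type*} (a : L) (s : Finset β) (m : β → TensorBidual L) :
    tsmulL a (∑ i ∈ s, m i) = ∑ i ∈ s, tsmulL a (m i) := by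
  ext f
  simp only [ContinuousLinearMap.sum_apply]
  show (∑ i ∈ s, m i) (leftBil L a f) = _
  rw [ContinuousLinearMap.sum_apply]
  rfl

lemma tsmulR_sum {β : Type*} (a : L) (s : Finset β) (m : β → TensorBidual L) :
    tsmulR a (∑ i ∈ s, m i) = ∑ i ∈ s, tsmulR a (m i) := by
  ext f
  simp only [ContinuousLinearMap.sum_apply]
  show (∑ i ∈ s, m i) (rightBil L a f) = _
  rw [ContinuousLinearMap.sum_apply]
  rfl

lemma tsmulL_add (a : L) (m m' : TensorBidual L) :
    tsmulL a (m + m') = tsmulL a m + tsmulL a m' := rfl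

lemma tsmulR_add (a : L) (m m' : TensorBidual L) :
    tsmulR a (m + m') = tsmulR a m + tsmulR a m' := rfl

lemma piSS_add (m m' : TensorBidual L) : piSS (m + m') = piSS m + piSS m' := rfl

lemma piSS_sum {β : Type*} (s : Finset β) (m : β → TensorBidual L) :
    piSS (∑ i ∈ s, m i) = ∑ i ∈ s, piSS (m i) := by
  ext f
  simp only [ContinuousLinearMap.sum_apply]
  show (∑ i ∈ s, m i) (piStar L f) = _
  rw [ContinuousLinearMap.sum_apply]
  rfl

/-! Density and extension lemmas for the ℓ¹ semigroup algebra. -/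

lemma denseδ (hdense : (Submodule.span ℂ (Set.range δ)).topologicalClosure = ⊤) : Dense ((Submodule.span ℂ (Set.range δ) : Submodule ℂ L) : Set L) :=
  Submodule.dense_iff_topologicalClosure_eq_top.2 hdense

lemma extδ (hdense : (Submodule.span ℂ (Set.range δ)).topologicalClosure = ⊤) {X : Type*} [NormedAddCommGroup X] [NormedSpace ℂ X]
    (f g : L →L[ℂ] X) (h : ∀ k, f (δ k) = g (δ k)) : f = g := by
  refine ContinuousLinearMap.ext_on (denseδ hdense) ?_
  rintro _ ⟨k, rfl⟩; exact h k

lemma mul_commδ (hmul : ∀ s t : ℕ, δ s * δ t = δ (max s t))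
    (hdense : (Submodule.span ℂ (Set.range δ)).topologicalClosure = ⊤) (a b : L) : a * b = b * a := by
  have h1 : ∀ k, ∀ a : L, a * δ k = δ k * a := by
    intro k
    have := extδ hdense ((ContinuousLinearMap.mul ℂ L).flip (δ k))
      (ContinuousLinearMap.mul ℂ L (δ k)) (fun j => by
        simp only [ContinuousLinearMap.flip_apply, ContinuousLinearMap.mul_apply',
          hmul, max_comm])
    exact fun a => DFunLike.congr_fun this a
  have := extδ hdense (ContinuousLinearMap.mul ℂ L a)
    ((ContinuousLinearMap.mul ℂ L).flip a) (fun k => by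
      exact h1 k a)
  exact DFunLike.congr_fun this b

lemma unitδ (hmul : ∀ s t : ℕ, δ s * δ t = δ (max s t))
    (hdense : (Submodule.span ℂ (Set.range δ)).topologicalClosure = ⊤) (a : L) : δ 0 * a = a := by
  have := extδ hdense (ContinuousLinearMap.mul ℂ L (δ 0))
    (ContinuousLinearMap.id ℂ L) (fun k => by
      show δ 0 * δ k = δ k
      rw [hmul]; simp)
  exact DFunLike.congr_fun this a

end Aux

section Phi
open ContinuousLinearMap NormedSpace Finset

variable {L : Type} [NonUnitalNormedRing L] [NormedSpace ℂ L] [IsScalarTower ℂ L L]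
  [SMulCommClass ℂ L L] [CompleteSpace L] {δ : ℕ → L}

variable (hnorm : ∀ (F : Finset ℕ) (c : ℕ → ℂ), ‖∑ s ∈ F, c s • δ s‖ = ∑ s ∈ F, ‖c s‖)

lemma normδ (hnorm : ∀ (F : Finset ℕ) (c : ℕ → ℂ),
    ‖∑ s ∈ F, c s • δ s‖ = ∑ s ∈ F, ‖c s‖) (s : ℕ) : ‖δ s‖ = 1 := by
  have := hnorm {s} (fun _ => (1:ℂ))
  simpa using this

lemma norm_finsupp (hnorm : ∀ (F : Finset ℕ) (c : ℕ → ℂ),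
    ‖∑ s ∈ F, c s • δ s‖ = ∑ s ∈ F, ‖c s‖) (l : ℕ →₀ ℂ) :
    ‖l.sum fun i c => c • δ i‖ = ∑ i ∈ l.support, ‖l i‖ := by
  rw [Finsupp.sum]
  exact hnorm l.support l

lemma liδ (hnorm : ∀ (F : Finset ℕ) (c : ℕ → ℂ),
    ‖∑ s ∈ F, c s • δ s‖ = ∑ s ∈ F, ‖c s‖) : LinearIndependent ℂ δ := by
  rw [linearIndependent_iff]
  intro l hl
  have h0 : ∑ i ∈ l.support, ‖l i‖ = 0 := by
    rw [← norm_finsupp hnorm l, ← Finsupp.linearCombination_apply, hl, norm_zero]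
  have hz : ∀ i ∈ l.support, ‖l i‖ = 0 :=
    (Finset.sum_eq_zero_iff_of_nonneg (fun i _ => norm_nonneg _)).1 h0
  ext i
  by_cases h : i ∈ l.support
  · simpa using hz i h
  · simpa using Finsupp.notMem_support_iff.1 h

/-- The character `φ_n` as a linear functional on the span of the point masses. -/
noncomputable def phiAux (hnorm : ∀ (F : Finset ℕ) (c : ℕ → ℂ),
    ‖∑ s ∈ F, c s • δ s‖ = ∑ s ∈ F, ‖c s‖) (n : ℕ) :
    (Submodule.span ℂ (Set.range δ)) →ₗ[ℂ] ℂ :=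
  (Finsupp.linearCombination ℂ (fun k => if k ≤ n then (1:ℂ) else 0)).comp (liδ hnorm).repr

lemma phiAux_apply (hnorm : ∀ (F : Finset ℕ) (c : ℕ → ℂ),
    ‖∑ s ∈ F, c s • δ s‖ = ∑ s ∈ F, ‖c s‖) (n : ℕ)
    (l : ℕ →₀ ℂ) (x : Submodule.span ℂ (Set.range δ))
    (hx : (x : L) = l.sum fun i c => c • δ i) :
    phiAux hnorm n x = ∑ i ∈ l.support, l i * (if i ≤ n then (1:ℂ) else 0) := by
  have hrepr : (liδ hnorm).repr x = l := by
    apply LinearIndependent.repr_eq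
    rw [Finsupp.linearCombination_apply, ← hx]
  simp only [phiAux, LinearMap.comp_apply, hrepr, Finsupp.linearCombination_apply]
  rw [Finsupp.sum]
  simp [mul_comm]

lemma phiAux_bound (hnorm : ∀ (F : Finset ℕ) (c : ℕ → ℂ),
    ‖∑ s ∈ F, c s • δ s‖ = ∑ s ∈ F, ‖c s‖) (n : ℕ)
    (x : Submodule.span ℂ (Set.range δ)) : ‖phiAux hnorm n x‖ ≤ 1 * ‖x‖ := by
  set l := (liδ hnorm).repr x with hl
  have hx : (x : L) = l.sum fun i c => c • δ i := by
    rw [hl, ← Finsupp.linearCombination_apply]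
    exact ((liδ hnorm).linearCombination_repr x).symm
  rw [phiAux_apply hnorm n l x hx, one_mul]
  have hxn : ‖x‖ = ∑ i ∈ l.support, ‖l i‖ := by
    rw [Submodule.coe_norm, hx]; exact norm_finsupp hnorm l
  rw [hxn]
  refine le_trans (norm_sum_le _ _) (Finset.sum_le_sum fun i _ => ?_)
  rw [norm_mul]
  rcases le_or_gt i n with h | h
  · simp [h]
  · simp [Nat.not_le.2 h]

variable (hdense : (Submodule.span ℂ (Set.range δ)).topologicalClosure = ⊤)

lemma denseRangeSubtypeL (hdense : (Submodule.span ℂ (Set.range δ)).topologicalClosure = ⊤) :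
    DenseRange ⇑(Submodule.span ℂ (Set.range δ)).subtypeL := by
  have := denseδ hdense
  simpa [Submodule.subtypeL, DenseRange, Subtype.range_coe] using this

/-- The character `φ_n` of `ℓ¹(ℕ, max)`, extended to a continuous functional on `L`. -/
noncomputable def phiC (hnorm : ∀ (F : Finset ℕ) (c : ℕ → ℂ),
    ‖∑ s ∈ F, c s • δ s‖ = ∑ s ∈ F, ‖c s‖)
    (hdense : (Submodule.span ℂ (Set.range δ)).topologicalClosure = ⊤) (n : ℕ) :
    StrongDual ℂ L :=
  ContinuousLinearMap.extend
    ((phiAux hnorm n).mkContinuous 1 (phiAux_bound hnorm n))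
    (Submodule.span ℂ (Set.range δ)).subtypeL

lemma phiC_apply_span (hnorm : ∀ (F : Finset ℕ) (c : ℕ → ℂ),
    ‖∑ s ∈ F, c s • δ s‖ = ∑ s ∈ F, ‖c s‖)
    (hdense : (Submodule.span ℂ (Set.range δ)).topologicalClosure = ⊤) (n : ℕ)
    (l : ℕ →₀ ℂ) :
    phiC hnorm hdense n (l.sum fun i c => c • δ i)
      = ∑ i ∈ l.support, l i * (if i ≤ n then (1:ℂ) else 0) := by
  have hmem : (l.sum fun i c => c • δ i) ∈ Submodule.span ℂ (Set.range δ) :=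
    Finsupp.mem_span_range_iff_exists_finsupp.2 ⟨l, rfl⟩
  have h := ContinuousLinearMap.extend_eq
    ((phiAux hnorm n).mkContinuous 1 (phiAux_bound hnorm n))
    (e := (Submodule.span ℂ (Set.range δ)).subtypeL)
    (denseRangeSubtypeL hdense)
    isUniformEmbedding_subtype_val.toIsUniformInducing
    ⟨_, hmem⟩
  rw [show (Submodule.span ℂ (Set.range δ)).subtypeL ⟨_, hmem⟩ = (l.sum fun i c => c • δ i) from rfl] at h
  rw [phiC, h, LinearMap.mkContinuous_apply, phiAux_apply hnorm n l ⟨_, hmem⟩ rfl]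

lemma phiC_delta (hnorm : ∀ (F : Finset ℕ) (c : ℕ → ℂ),
    ‖∑ s ∈ F, c s • δ s‖ = ∑ s ∈ F, ‖c s‖)
    (hdense : (Submodule.span ℂ (Set.range δ)).topologicalClosure = ⊤) (n k : ℕ) :
    phiC hnorm hdense n (δ k) = if k ≤ n then (1:ℂ) else 0 := by
  have h := phiC_apply_span hnorm hdense n (Finsupp.single k 1)
  rw [Finsupp.sum_single_index (by simp)] at h
  rw [one_smul] at h
  rw [h, Finsupp.support_single_ne_zero k one_ne_zero]
  simp

end Phi

section PhiProps
open ContinuousLinearMap NormedSpace Finset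

variable {L : Type} [NonUnitalNormedRing L] [NormedSpace ℂ L] [IsScalarTower ℂ L L]
  [SMulCommClass ℂ L L] [CompleteSpace L] {δ : ℕ → L}
  (hmul : ∀ s t : ℕ, δ s * δ t = δ (max s t))
  (hnorm : ∀ (F : Finset ℕ) (c : ℕ → ℂ), ‖∑ s ∈ F, c s • δ s‖ = ∑ s ∈ F, ‖c s‖)
  (hdense : (Submodule.span ℂ (Set.range δ)).topologicalClosure = ⊤)

include hdense in
/-- A closed predicate holding on the span of the `δ`'s holds everywhere. -/
lemma denseArg {P : Set L} (hP : IsClosed P)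
    (h : ∀ l : ℕ →₀ ℂ, (l.sum fun i c => c • δ i) ∈ P) (a : L) : a ∈ P := by
  have h1 : (Submodule.span ℂ (Set.range δ) : Set L) ⊆ P := by
    intro x hx
    obtain ⟨l, rfl⟩ := Finsupp.mem_span_range_iff_exists_finsupp.1 hx
    exact h l
  have := (denseδ hdense).closure_eq
  have h2 : closure (Submodule.span ℂ (Set.range δ) : Set L) ⊆ P := hP.closure_subset_iff.2 h1
  rw [this] at h2
  exact h2 trivial

include hnorm hdense in
lemma phiC_norm_le (n : ℕ) (a : L) : ‖phiC hnorm hdense n a‖ ≤ ‖a‖ := by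
  refine denseArg hdense (P := {a | ‖phiC hnorm hdense n a‖ ≤ ‖a‖}) ?_ ?_ a
  · exact isClosed_le (by fun_prop) (by fun_prop)
  · intro l
    simp only [Set.mem_setOf_eq, phiC_apply_span hnorm hdense n l, norm_finsupp hnorm l]
    refine le_trans (norm_sum_le _ _) (Finset.sum_le_sum fun i _ => ?_)
    rw [norm_mul]
    rcases le_or_gt i n with h | h
    · simp [h]
    · simp [Nat.not_le.2 h]

include hmul hnorm hdense in
lemma phiC_mul_delta (n k : ℕ) (a : L) :
    phiC hnorm hdense n (δ k * a) = phiC hnorm hdense n (δ k) * phiC hnorm hdense n a := by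
  have := extδ hdense ((phiC hnorm hdense n).comp (ContinuousLinearMap.mul ℂ L (δ k)))
    ((phiC hnorm hdense n (δ k)) • phiC hnorm hdense n) (fun j => by
      show phiC hnorm hdense n (δ k * δ j) = _
      rw [hmul]
      show _ = phiC hnorm hdense n (δ k) • phiC hnorm hdense n (δ j)
      rw [phiC_delta hnorm hdense, phiC_delta hnorm hdense, phiC_delta hnorm hdense,
        smul_eq_mul]
      by_cases h1 : k ≤ n <;> by_cases h2 : j ≤ n <;>
        simp [max_le_iff, h1, h2])
  have h2 := DFunLike.congr_fun this a
  simpa using h2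

include hmul hnorm hdense in
lemma phiC_mul (n : ℕ) (a b : L) :
    phiC hnorm hdense n (a * b) = phiC hnorm hdense n a * phiC hnorm hdense n b := by
  have := extδ hdense ((phiC hnorm hdense n).comp ((ContinuousLinearMap.mul ℂ L).flip b))
    ((phiC hnorm hdense n b) • phiC hnorm hdense n) (fun k => by
      show phiC hnorm hdense n (δ k * b) = phiC hnorm hdense n b • phiC hnorm hdense n (δ k)
      rw [phiC_mul_delta hmul hnorm hdense, smul_eq_mul, mul_comm])
  have h2 := DFunLike.congr_fun this a
  simpa [mul_comm] using h2

include hnorm hdense in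
/-- The ℓ¹-variation bound on the characters. -/
lemma phiC_var_bound (N : ℕ) (a : L) :
    ‖phiC hnorm hdense 0 a‖ +
      ∑ n ∈ Finset.range N, ‖phiC hnorm hdense (n+1) a - phiC hnorm hdense n a‖ ≤ ‖a‖ := by
  refine denseArg hdense (P := {a | ‖phiC hnorm hdense 0 a‖ +
      ∑ n ∈ Finset.range N, ‖phiC hnorm hdense (n+1) a - phiC hnorm hdense n a‖ ≤ ‖a‖})
    ?_ ?_ a
  · exact isClosed_le (by fun_prop) (by fun_prop)
  · intro l
    simp only [Set.mem_setOf_eq, phiC_apply_span hnorm hdense, norm_finsupp hnorm l]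
    have key : ∀ n : ℕ,
        (∑ i ∈ l.support, l i * (if i ≤ n+1 then (1:ℂ) else 0))
          - ∑ i ∈ l.support, l i * (if i ≤ n then (1:ℂ) else 0)
          = if n+1 ∈ l.support then l (n+1) else 0 := by
      intro n
      rw [← Finset.sum_sub_distrib, ← Finset.sum_ite_eq' l.support (n+1) (fun i => l i)]
      refine Finset.sum_congr rfl fun i _ => ?_
      rcases Nat.lt_trichotomy i (n+1) with h | h | h
      · simp [Nat.le_of_lt_succ h, Nat.le_of_lt_succ, h.le, Nat.ne_of_lt h, le_of_lt h]
      · subst h; simp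
      · simp [Nat.not_le.2 h, Nat.not_le.2 (Nat.lt_of_succ_lt h), (Nat.ne_of_lt h).symm]
    have key0 : (∑ i ∈ l.support, l i * (if i ≤ 0 then (1:ℂ) else 0))
        = if 0 ∈ l.support then l 0 else 0 := by
      rw [← Finset.sum_ite_eq' l.support 0 (fun i => l i)]
      refine Finset.sum_congr rfl fun i _ => ?_
      rcases Nat.eq_zero_or_pos i with h | h
      · subst h; simp
      · simp [Nat.not_le.2 h, Nat.pos_iff_ne_zero.1 h]
    have hsum : (∑ n ∈ Finset.range N,
        ‖(∑ i ∈ l.support, l i * (if i ≤ n+1 then (1:ℂ) else 0))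
          - ∑ i ∈ l.support, l i * (if i ≤ n then (1:ℂ) else 0)‖)
        = ∑ n ∈ Finset.range N, ‖if n+1 ∈ l.support then l (n+1) else 0‖ :=
      Finset.sum_congr rfl fun n _ => by rw [key n]
    rw [key0, hsum]
    have : (‖if 0 ∈ l.support then l 0 else 0‖)
        + ∑ n ∈ Finset.range N, ‖if n+1 ∈ l.support then l (n+1) else 0‖
        = ∑ n ∈ Finset.range (N+1), ‖if n ∈ l.support then l n else 0‖ := by
      rw [Finset.sum_range_succ']; exact add_comm _ _
    rw [this]
    calc (∑ n ∈ Finset.range (N+1), ‖if n ∈ l.support then l n else 0‖)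
        = ∑ n ∈ (Finset.range (N+1)).filter (· ∈ l.support), ‖l n‖ := by
          rw [Finset.sum_filter]
          refine Finset.sum_congr rfl fun n _ => ?_
          split_ifs <;> simp
      _ ≤ ∑ i ∈ l.support, ‖l i‖ := by
          refine Finset.sum_le_sum_of_subset_of_nonneg ?_ (fun i _ _ => norm_nonneg _)
          intro i hi
          exact (Finset.mem_filter.1 hi).2

end PhiProps

section SPA
open ContinuousLinearMap NormedSpace Finset

variable {L : Type} [NonUnitalNormedRing L] [NormedSpace ℂ L] [IsScalarTower ℂ L L]
  [SMulCommClass ℂ L L] [CompleteSpace L] {δ : ℕ → L}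

/-- The natural directed system on ℕ. -/
abbrev natDS : DirSys :=
  ⟨ℕ, (· ≤ ·), fun i => le_refl i, fun h h' => le_trans h h', ⟨0⟩,
    fun i j => ⟨max i j, le_max_left _ _, le_max_right _ _⟩⟩

variable (hmul : ∀ s t : ℕ, δ s * δ t = δ (max s t))
  (hnorm : ∀ (F : Finset ℕ) (c : ℕ → ℂ), ‖∑ s ∈ F, c s • δ s‖ = ∑ s ∈ F, ‖c s‖)
  (hdense : (Submodule.span ℂ (Set.range δ)).topologicalClosure = ⊤)

include hmul in
lemma q_mul_q (k : ℕ) : (δ k - δ (k+1)) * (δ k - δ (k+1)) = δ k - δ (k+1) := by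
  rw [mul_sub, sub_mul, sub_mul, hmul, hmul, hmul, hmul]
  rw [max_self, max_self, max_eq_right (Nat.le_succ k), max_eq_left (Nat.le_succ k)]
  abel

include hmul hnorm hdense in
lemma mul_q (k : ℕ) (a : L) :
    a * (δ k - δ (k+1)) = (phiC hnorm hdense k a) • (δ k - δ (k+1)) := by
  have := extδ hdense ((ContinuousLinearMap.mul ℂ L).flip (δ k - δ (k+1)))
    ((phiC hnorm hdense k).smulRight (δ k - δ (k+1))) (fun j => by
      show δ j * (δ k - δ (k+1)) = phiC hnorm hdense k (δ j) • (δ k - δ (k+1))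
      rw [mul_sub, hmul, hmul, phiC_delta hnorm hdense]
      rcases le_or_gt j k with h | h
      · rw [max_eq_right h, max_eq_right (le_trans h (Nat.le_succ k)), if_pos h, one_smul]
      · rw [max_eq_left h.le, max_eq_left (Nat.succ_le_of_lt h), if_neg (Nat.not_le.2 h),
          zero_smul, sub_self])
  exact DFunLike.congr_fun this a

include hmul hnorm hdense in
lemma q_mul (k : ℕ) (a : L) :
    (δ k - δ (k+1)) * a = (phiC hnorm hdense k a) • (δ k - δ (k+1)) := by
  rw [mul_commδ hmul hdense, mul_q hmul hnorm hdense]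

include hmul hnorm hdense in
set_option maxHeartbeats 1000000 in
lemma spa : StrongPseudoAmenable L := by
  classical
  set q : ℕ → L := fun k => δ k - δ (k+1) with hq
  set m : ℕ → TensorBidual L := fun n =>
    (∑ k ∈ Finset.range (n+1), elemT (q k) (q k)) + elemT (δ (n+1)) (δ (n+1)) with hm
  have hpiSS : ∀ n, piSS (m n) = inclB (δ 0) := by
    intro n
    rw [hm]
    show piSS (_ + _) = _
    rw [piSS_add, piSS_sum]
    have h1 : ∀ k, piSS (elemT (q k) (q k)) = inclB (q k) := by
      intro k
      rw [piSS_elemT, hq]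
      show inclB ((δ k - δ (k+1)) * (δ k - δ (k+1))) = _
      rw [q_mul_q hmul]
    have h2 : (∑ k ∈ Finset.range (n+1), piSS (elemT (q k) (q k)))
        = inclB (∑ k ∈ Finset.range (n+1), q k) := by
      rw [Finset.sum_congr rfl fun k _ => h1 k]
      exact (map_sum (inclusionInDoubleDual ℂ L) _ _).symm
    rw [h2, piSS_elemT, hmul, max_self]
    have h3 : (∑ k ∈ Finset.range (n+1), q k) = δ 0 - δ (n+1) := by
      rw [hq]; exact Finset.sum_range_sub' δ (n+1)
    rw [h3]
    have : inclB (δ 0 - δ (n+1)) + inclB (δ (n+1)) = inclB (δ 0) := by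
      have := map_sub (inclusionInDoubleDual ℂ L) (δ 0) (δ (n+1))
      show inclusionInDoubleDual ℂ L _ + inclusionInDoubleDual ℂ L _ = inclusionInDoubleDual ℂ L _
      rw [this]; abel
    rw [this]
  have hcentralq : ∀ (a : L) (k : ℕ),
      tsmulL a (elemT (q k) (q k)) = tsmulR a (elemT (q k) (q k)) := by
    intro a k
    rw [tsmulL_elemT, tsmulR_elemT, mul_q hmul hnorm hdense, q_mul hmul hnorm hdense,
      elemT_smul_left, elemT_smul_right]
  have hcomm : ∀ (a : L) (n : ℕ), tsmulL a (m n) - tsmulR a (m n)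
      = elemT (a * δ (n+1)) (δ (n+1)) - elemT (δ (n+1)) (δ (n+1) * a) := by
    intro a n
    rw [hm]
    show tsmulL a (_ + _) - tsmulR a (_ + _) = _
    rw [tsmulL_add, tsmulR_add, tsmulL_sum, tsmulR_sum,
      Finset.sum_congr rfl fun k _ => hcentralq a k, tsmulL_elemT, tsmulR_elemT]
    abel
  refine ⟨natDS, m, ?_, ?_, ?_⟩
  · -- asymptotic centrality
    intro a ε hε
    obtain ⟨y, hy, hyd⟩ := (denseδ hdense).exists_dist_lt a (by linarith : (0:ℝ) < ε/3)
    obtain ⟨l, rfl⟩ := Finsupp.mem_span_range_iff_exists_finsupp.1 hy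
    refine ⟨l.support.sup id, fun j hj => ?_⟩
    set x := δ (j+1) with hx
    have hsupp : ∀ i ∈ l.support, i ≤ j + 1 := fun i hi =>
      le_trans (le_trans (Finset.le_sup (f := id) hi) hj) (Nat.le_succ j)
    have hyx : (l.sum fun i c => c • δ i) * x = (∑ i ∈ l.support, l i) • x := by
      rw [Finsupp.sum, Finset.sum_mul, Finset.sum_smul]
      refine Finset.sum_congr rfl fun i hi => ?_
      rw [smul_mul_assoc, hx, hmul, max_eq_right (hsupp i hi)]
    have hxy : x * (l.sum fun i c => c • δ i) = (∑ i ∈ l.support, l i) • x := by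
      rw [mul_commδ hmul hdense, hyx]
    have hvanish : elemT ((l.sum fun i c => c • δ i) * x) x
        - elemT x (x * (l.sum fun i c => c • δ i)) = 0 := by
      rw [hyx, hxy, elemT_smul_left, elemT_smul_right, sub_self]
    have hC : elemT ((l.sum fun i c => c • δ i) * x) x
        = elemT x (x * (l.sum fun i c => c • δ i)) := by
      rw [hyx, hxy, elemT_smul_left, elemT_smul_right]
    have hsplit : tsmulL a (m j) - tsmulR a (m j)
        = elemT ((a - l.sum fun i c => c • δ i) * x) x
          - elemT x (x * (a - l.sum fun i c => c • δ i)) := by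
      rw [hcomm a j, ← hx, sub_mul, mul_sub, elemT_sub_left, elemT_sub_right, hC]
      abel
    have hnx : ‖x‖ = 1 := normδ hnorm (j+1)
    have hbound : ‖tsmulL a (m j) - tsmulR a (m j)‖ ≤ 2 * ‖a - l.sum fun i c => c • δ i‖ := by
      rw [hsplit]
      refine le_trans (norm_sub_le _ _) ?_
      have b1 := norm_elemT_le ((a - l.sum fun i c => c • δ i) * x) x
      have b2 := norm_elemT_le x (x * (a - l.sum fun i c => c • δ i))
      have c1 : ‖(a - l.sum fun i c => c • δ i) * x‖ ≤ ‖a - l.sum fun i c => c • δ i‖ := by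
        calc ‖(a - l.sum fun i c => c • δ i) * x‖
            ≤ ‖a - l.sum fun i c => c • δ i‖ * ‖x‖ := norm_mul_le _ _
          _ = ‖a - l.sum fun i c => c • δ i‖ := by rw [hnx, mul_one]
      have c2 : ‖x * (a - l.sum fun i c => c • δ i)‖ ≤ ‖a - l.sum fun i c => c • δ i‖ := by
        calc ‖x * (a - l.sum fun i c => c • δ i)‖
            ≤ ‖x‖ * ‖a - l.sum fun i c => c • δ i‖ := norm_mul_le _ _
          _ = ‖a - l.sum fun i c => c • δ i‖ := by rw [hnx, one_mul]
      have d1 : ‖elemT ((a - l.sum fun i c => c • δ i) * x) x‖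
          ≤ ‖a - l.sum fun i c => c • δ i‖ := by
        refine le_trans b1 ?_
        rw [hnx, mul_one]; exact c1
      have d2 : ‖elemT x (x * (a - l.sum fun i c => c • δ i))‖
          ≤ ‖a - l.sum fun i c => c • δ i‖ := by
        refine le_trans b2 ?_
        rw [hnx, one_mul]; exact c2
      linarith
    have hdist : ‖a - l.sum fun i c => c • δ i‖ < ε/3 := by
      rw [← dist_eq_norm]; exact hyd
    show dist (tsmulL a (m j) - tsmulR a (m j)) (0 : TensorBidual L) < ε
    rw [dist_zero_right]
    calc ‖tsmulL a (m j) - tsmulR a (m j)‖ ≤ 2 * ‖a - l.sum fun i c => c • δ i‖ := hbound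
      _ < 2 * (ε/3) := by linarith
      _ < ε := by linarith
  · -- bsmulL = bsmulR on piSS
    intro a α
    rw [hpiSS α, bsmulL_inclB, bsmulR_inclB, mul_commδ hmul hdense]
  · -- approximation of identity
    intro a ε hε
    refine ⟨0, fun j _ => ?_⟩
    show dist (bsmulR a (piSS (m j))) (inclB a) < ε
    rw [hpiSS j, bsmulR_inclB, unitδ hmul hdense]
    simpa using hε

end SPA

section NotAmen
open ContinuousLinearMap NormedSpace Finset

lemma netConst (D : DirSys) {X : Type*} [PseudoMetricSpace X] (x : X) :
    D.Tendsto (fun _ => x) x := by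
  obtain ⟨i⟩ := D.nonempty
  exact fun ε hε => ⟨i, fun j _ => by simpa using hε⟩

lemma netDominated (D : DirSys) {X : Type*} [PseudoMetricSpace X] {f : D.ι → ℂ} {x : ℂ}
    {g : D.ι → X} {z : X} (hg : D.Tendsto g z) (hbd : ∀ α, dist (f α) x ≤ dist (g α) z) :
    D.Tendsto f x := by
  intro ε hε
  obtain ⟨i, hi⟩ := hg ε hε
  exact ⟨i, fun j hj => lt_of_le_of_lt (hbd j) (hi j hj)⟩

lemma netAdd (D : DirSys) {f g : D.ι → ℂ} {x y : ℂ} (hf : D.Tendsto f x)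
    (hg : D.Tendsto g y) : D.Tendsto (fun α => f α + g α) (x + y) := by
  intro ε hε
  obtain ⟨i1, hi1⟩ := hf (ε/2) (by linarith)
  obtain ⟨i2, hi2⟩ := hg (ε/2) (by linarith)
  obtain ⟨k, hk1, hk2⟩ := D.directed i1 i2
  refine ⟨k, fun j hj => ?_⟩
  calc dist (f j + g j) (x + y) ≤ dist (f j) x + dist (g j) y := dist_add_add_le _ _ _ _
    _ < ε/2 + ε/2 := add_lt_add (hi1 j (D.trans hk1 hj)) (hi2 j (D.trans hk2 hj))
    _ = ε := by ring

lemma netSub (D : DirSys) {f g : D.ι → ℂ} {x y : ℂ} (hf : D.Tendsto f x)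
    (hg : D.Tendsto g y) : D.Tendsto (fun α => f α - g α) (x - y) := by
  intro ε hε
  obtain ⟨i1, hi1⟩ := hf (ε/2) (by linarith)
  obtain ⟨i2, hi2⟩ := hg (ε/2) (by linarith)
  obtain ⟨k, hk1, hk2⟩ := D.directed i1 i2
  refine ⟨k, fun j hj => ?_⟩
  calc dist (f j - g j) (x - y) ≤ dist (f j) x + dist (g j) y := dist_sub_sub_le _ _ _ _
    _ < ε/2 + ε/2 := add_lt_add (hi1 j (D.trans hk1 hj)) (hi2 j (D.trans hk2 hj))
    _ = ε := by ring

lemma netSum (D : DirSys) {β : Type*} (s : Finset β) (f : β → D.ι → ℂ) (x : β → ℂ)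
    (h : ∀ b ∈ s, D.Tendsto (f b) (x b)) :
    D.Tendsto (fun α => ∑ b ∈ s, f b α) (∑ b ∈ s, x b) := by
  classical
  induction s using Finset.cons_induction with
  | empty => simpa using netConst D 0
  | cons b s hb ih =>
    simp only [Finset.sum_cons]
    exact netAdd D (h b (Finset.mem_cons_self b s))
      (ih fun c hc => h c (Finset.mem_cons_of_mem hc))

variable {L : Type} [NonUnitalNormedRing L] [NormedSpace ℂ L] [IsScalarTower ℂ L L]
  [SMulCommClass ℂ L L] [CompleteSpace L] {δ : ℕ → L}
  (hmul : ∀ s t : ℕ, δ s * δ t = δ (max s t))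
  (hnorm : ∀ (F : Finset ℕ) (c : ℕ → ℂ), ‖∑ s ∈ F, c s • δ s‖ = ∑ s ∈ F, ‖c s‖)
  (hdense : (Submodule.span ℂ (Set.range δ)).topologicalClosure = ⊤)

set_option maxHeartbeats 1000000 in
include hmul hnorm hdense in
lemma notAmen : ¬ AmenableBanachAlgebra L := by
  classical
  rintro ⟨D, m, C, hmem, hC, hcomm, happ⟩
  set φ : ℕ → StrongDual ℂ L := phiC hnorm hdense with hφdef
  have hφnorm : ∀ n, ‖φ n‖ ≤ 1 :=
    fun n => opNorm_le_bound _ zero_le_one fun a => by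
      rw [one_mul]; exact phiC_norm_le hnorm hdense n a
  obtain ⟨α0⟩ := D.nonempty
  have hC0 : (0:ℝ) ≤ C := le_trans (norm_nonneg _) (hC α0)
  set N : ℕ := ⌊C⌋₊ + 1 with hN
  set Bf : ℕ → ℕ → BilForms L := fun p r => (φ p).smulRight (φ r) with hBfdef
  have hBfapp : ∀ p r (x y : L), Bf p r x y = φ p x * φ r y := by
    intro p r x y
    simp [hBfdef, smulRight_apply, smul_eq_mul]
  have hBfnorm : ∀ p r, ‖Bf p r‖ ≤ 1 := by
    intro p r
    refine opNorm_le_bound _ zero_le_one fun x => ?_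
    rw [one_mul]
    refine opNorm_le_bound _ (norm_nonneg x) fun y => ?_
    rw [hBfapp, norm_mul]
    exact mul_le_mul (phiC_norm_le hnorm hdense p x) (phiC_norm_le hnorm hdense r y)
      (norm_nonneg _) (norm_nonneg _)
  -- diagonal pieces tend to 1
  have hA : ∀ n, D.Tendsto (fun α => m α (Bf n n)) 1 := by
    intro n
    refine netDominated D (happ (δ n)) fun α => ?_
    have key1 : piStar L (dualLOp L (δ n) (φ n)) = Bf n n := by
      ext x y
      show φ n ((x * y) * δ n) = Bf n n x y
      rw [phiC_mul hmul hnorm hdense, phiC_mul hmul hnorm hdense, hBfapp,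
        phiC_delta hnorm hdense, if_pos (le_refl n), mul_one]
    have key2 : bsmulR (δ n) (piSS (m α)) (φ n) = m α (Bf n n) := by
      rw [← key1]; rfl
    have key3 : inclB (δ n) (φ n) = 1 := by
      show φ n (δ n) = 1
      rw [hφdef, phiC_delta hnorm hdense, if_pos (le_refl n)]
    have : dist (m α (Bf n n)) 1 = ‖(bsmulR (δ n) (piSS (m α)) - inclB (δ n)) (φ n)‖ := by
      rw [ContinuousLinearMap.sub_apply, key2, key3, dist_eq_norm]
    rw [this, dist_eq_norm (bsmulR (δ n) (piSS (m α))) (inclB (δ n))]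
    calc ‖(bsmulR (δ n) (piSS (m α)) - inclB (δ n)) (φ n)‖
        ≤ ‖bsmulR (δ n) (piSS (m α)) - inclB (δ n)‖ * ‖φ n‖ := le_opNorm _ _
      _ ≤ ‖bsmulR (δ n) (piSS (m α)) - inclB (δ n)‖ * 1 :=
          mul_le_mul_of_nonneg_left (hφnorm n) (by positivity)
      _ = ‖bsmulR (δ n) (piSS (m α)) - inclB (δ n)‖ := mul_one _
  -- off-diagonal pieces tend to 0
  have hB : ∀ n, D.Tendsto (fun α => m α (Bf n (n+1))) 0 := by
    intro n
    refine netDominated D (hcomm (δ (n+1))) fun α => ?_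
    have keyL : leftBil L (δ (n+1)) (Bf n (n+1)) = 0 := by
      ext x y
      show Bf n (n+1) (δ (n+1) * x) y = 0
      rw [hBfapp, hφdef, phiC_mul_delta hmul hnorm hdense, phiC_delta hnorm hdense,
        if_neg (by omega), zero_mul, zero_mul]
    have keyR : rightBil L (δ (n+1)) (Bf n (n+1)) = Bf n (n+1) := by
      ext x y
      show Bf n (n+1) x (y * δ (n+1)) = Bf n (n+1) x y
      rw [hBfapp, hBfapp, hφdef, phiC_mul hmul hnorm hdense, phiC_delta hnorm hdense,
        if_pos (le_refl (n+1)), mul_one]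
    have key : (tsmulL (δ (n+1)) (m α) - tsmulR (δ (n+1)) (m α)) (Bf n (n+1))
        = - m α (Bf n (n+1)) := by
      show m α (leftBil L (δ (n+1)) (Bf n (n+1))) - m α (rightBil L (δ (n+1)) (Bf n (n+1)))
        = _
      rw [keyL, keyR, (m α).map_zero, zero_sub]
    rw [dist_zero_right, dist_zero_right, ← norm_neg (m α (Bf n (n+1))), ← key]
    calc ‖(tsmulL (δ (n+1)) (m α) - tsmulR (δ (n+1)) (m α)) (Bf n (n+1))‖
        ≤ ‖tsmulL (δ (n+1)) (m α) - tsmulR (δ (n+1)) (m α)‖ * ‖Bf n (n+1)‖ := le_opNorm _ _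
      _ ≤ ‖tsmulL (δ (n+1)) (m α) - tsmulR (δ (n+1)) (m α)‖ * 1 :=
          mul_le_mul_of_nonneg_left (hBfnorm n (n+1)) (norm_nonneg _)
      _ = _ := mul_one _
  -- the big bilinear form
  set F := Bf 0 0 + ∑ n ∈ Finset.range N, (Bf (n+1) (n+1) - Bf n (n+1)) with hFdef
  have hmF : ∀ α, m α F = m α (Bf 0 0)
      + ∑ n ∈ Finset.range N, (m α (Bf (n+1) (n+1)) - m α (Bf n (n+1))) := by
    intro α
    rw [hFdef, map_add, map_sum]
    congr 1
    exact Finset.sum_congr rfl fun n _ => ContinuousLinearMap.map_sub (m α) (Bf (n+1) (n+1)) (Bf n (n+1))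
  have hlim : D.Tendsto (fun α => m α F) ((1:ℂ)
      + ∑ n ∈ Finset.range N, ((1:ℂ) - 0)) := by
    have := netAdd D (hA 0) (netSum D (Finset.range N)
      (fun n α => m α (Bf (n+1) (n+1)) - m α (Bf n (n+1)))
      (fun n => (1:ℂ) - 0)
      (fun n _ => netSub D (hA (n+1)) (hB n)))
    refine netDominated D this fun α => ?_
    rw [hmF α]
  have hval : ((1:ℂ) + ∑ n ∈ Finset.range N, ((1:ℂ) - 0)) = ((N + 1 : ℕ) : ℂ) := by
    simp
    push_cast
    ring
  have hFnorm : ‖F‖ ≤ 1 := by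
    refine opNorm_le_bound _ zero_le_one fun x => ?_
    rw [one_mul]
    refine opNorm_le_bound _ (norm_nonneg x) fun y => ?_
    have hFxy : F x y = φ 0 x * φ 0 y
        + ∑ n ∈ Finset.range N, (φ (n+1) x - φ n x) * φ (n+1) y := by
      rw [hFdef]
      simp only [ContinuousLinearMap.add_apply, ContinuousLinearMap.sum_apply,
        ContinuousLinearMap.sub_apply]
      rw [hBfapp]
      congr 1
      refine Finset.sum_congr rfl fun n _ => ?_
      rw [hBfapp, hBfapp]
      ring
    rw [hFxy]
    calc ‖φ 0 x * φ 0 y + ∑ n ∈ Finset.range N, (φ (n+1) x - φ n x) * φ (n+1) y‖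
        ≤ ‖φ 0 x * φ 0 y‖ + ‖∑ n ∈ Finset.range N, (φ (n+1) x - φ n x) * φ (n+1) y‖ :=
          norm_add_le _ _
      _ ≤ ‖φ 0 x‖ * ‖y‖ + ∑ n ∈ Finset.range N, ‖φ (n+1) x - φ n x‖ * ‖y‖ := by
          refine add_le_add ?_ ?_
          · rw [norm_mul]
            exact mul_le_mul_of_nonneg_left (phiC_norm_le hnorm hdense 0 y) (norm_nonneg _)
          · refine le_trans (norm_sum_le _ _) (Finset.sum_le_sum fun n _ => ?_)
            rw [norm_mul]
            exact mul_le_mul_of_nonneg_left (phiC_norm_le hnorm hdense (n+1) y) (norm_nonneg _)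
      _ = (‖φ 0 x‖ + ∑ n ∈ Finset.range N, ‖φ (n+1) x - φ n x‖) * ‖y‖ := by
          rw [add_mul, Finset.sum_mul]
      _ ≤ ‖x‖ * ‖y‖ :=
          mul_le_mul_of_nonneg_right (phiC_var_bound hnorm hdense N x) (norm_nonneg y)
  -- contradiction
  obtain ⟨i, hi⟩ := hlim 1 one_pos
  have h1 := hi i (D.refl i)
  rw [hval] at h1
  have hb : ‖m i F‖ ≤ C := by
    calc ‖m i F‖ ≤ ‖m i‖ * ‖F‖ := @le_opNorm ℂ ℂ (BilForms L) ℂ _ _ _ _ _ _ (RingHom.id ℂ) _ (m i) F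
      _ ≤ C * 1 := mul_le_mul (hC i) hFnorm (opNorm_nonneg _) hC0
      _ = C := mul_one _
  have h2 : ((N + 1 : ℕ) : ℝ) ≤ ‖m i F‖ + 1 := by
    have h3 : ‖((N + 1 : ℕ) : ℂ)‖ - ‖m i F‖ ≤ ‖m i F - ((N + 1 : ℕ) : ℂ)‖ := by
      rw [norm_sub_rev]
      exact norm_sub_norm_le _ _
    have h4 : ‖((N + 1 : ℕ) : ℂ)‖ = ((N + 1 : ℕ) : ℝ) := by
      rw [Complex.norm_natCast]
    rw [dist_eq_norm] at h1
    linarith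
  have h5 : C < (⌊C⌋₊ : ℝ) + 1 := by
    have := Nat.lt_floor_add_one C
    push_cast at this
    linarith
  have h6 : ((N + 1 : ℕ) : ℝ) ≤ C + 1 := le_trans h2 (by linarith)
  push_cast at h6
  have hN' : (N : ℝ) = (⌊C⌋₊ : ℝ) + 1 := by rw [hN]; push_cast; ring
  linarith

end NotAmen

/-- Let `S = ℕ` with the semigroup operation `m · n = max m n`.  Then
`ℓ¹(S)` is strong pseudo-amenable but not amenable. -/
theorem strongPseudoAmenable_not_amenable_maxSemigroupAlgebra
    (L : Type) [NonUnitalNormedRing L] [NormedSpace ℂ L] [IsScalarTower ℂ L L]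
    [SMulCommClass ℂ L L] [CompleteSpace L]
    (δ : ℕ → L) (hL : IsL1SemigroupAlgebra ℕ max L δ) :
    StrongPseudoAmenable L ∧ ¬ AmenableBanachAlgebra L := by
  obtain ⟨hmul, hnorm, hdense⟩ := hL
  exact ⟨spa hmul hnorm hdense, notAmen hmul hnorm hdense⟩
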